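/- Logarithmic Gronwall lemma: let T ≥ 0, let f : [0,T] → ℝ be continuous and nonnegative, and let A ≥ 0, B ≥ 0 be constants such that for every t ∈ [0,T], f(t) ≤ A + B ∫₀ᵗ f(s) · ln(e + f(s)) ds. Then for every t ∈ [0,T], e + f(t) ≤ (e + A)^{exp(B t)}; in particular f remains bounded on [0,T] by a quantity depending only on A, B and T. -/

import Mathlib

open scoped BigOperators

/-- Logarithmic Gronwall lemma (Brezis–Gallouët type): if a continuous nonnegative
function `f` on `[0, T]` satisfies `f t ≤ A + B ∫₀ᵗ f s * log (e + f s) ds`, then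
`e + f t ≤ (e + A) ^ (exp (B * t))` on `[0, T]`. -/
theorem log_gronwall
    (T : ℝ) (hT : 0 ≤ T) (f : ℝ → ℝ)
    (hf_cont : ContinuousOn f (Set.Icc 0 T))
    (hf_nonneg : ∀ t ∈ Set.Icc (0 : ℝ) T, 0 ≤ f t)
    (A B : ℝ) (hA : 0 ≤ A) (hB : 0 ≤ B)
    (hmain : ∀ t ∈ Set.Icc (0 : ℝ) T,
      f t ≤ A + B * ∫ s in (0 : ℝ)..t, f s * Real.log (Real.exp 1 + f s)) :
    ∀ t ∈ Set.Icc (0 : ℝ) T,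
      Real.exp 1 + f t ≤ (Real.exp 1 + A) ^ Real.exp (B * t) := by
  have he1 : (0:ℝ) < Real.exp 1 := Real.exp_pos 1
  have he2 : (1:ℝ) ≤ Real.exp 1 := Real.one_le_exp zero_le_one
  set g : ℝ → ℝ := fun s => f s * Real.log (Real.exp 1 + f s) with hg_def
  set F : ℝ → ℝ := fun t => ∫ s in (0 : ℝ)..t, g s with hF_def
  set u : ℝ → ℝ := fun t => Real.exp 1 + A + B * F t with hu_def
  set v : ℝ → ℝ := fun t => Real.log (u t) with hv_def
  -- continuity of g
  have hg_cont : ContinuousOn g (Set.Icc 0 T) := by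
    refine hf_cont.mul ((continuousOn_const.add hf_cont).log ?_)
    intro x hx
    have := hf_nonneg x hx
    exact (by positivity : (0:ℝ) < Real.exp 1 + f x).ne'
  -- interval integrability
  have hg_int : ∀ t ∈ Set.Icc (0:ℝ) T, IntervalIntegrable g MeasureTheory.volume 0 t := by
    intro t ht
    apply ContinuousOn.intervalIntegrable
    rw [Set.uIcc_of_le ht.1]
    exact hg_cont.mono (Set.Icc_subset_Icc le_rfl ht.2)
  -- F nonneg
  have hF_nonneg : ∀ t ∈ Set.Icc (0:ℝ) T, 0 ≤ F t := by
    intro t ht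
    apply intervalIntegral.integral_nonneg ht.1
    intro s hs
    have hs' : s ∈ Set.Icc (0:ℝ) T := ⟨hs.1, hs.2.trans ht.2⟩
    have h1 := hf_nonneg s hs'
    have h2 : (0:ℝ) ≤ Real.log (Real.exp 1 + f s) :=
      Real.log_nonneg (by linarith)
    exact mul_nonneg h1 h2
  have hu_ge : ∀ t ∈ Set.Icc (0:ℝ) T, Real.exp 1 ≤ u t := by
    intro t ht
    have h1 := hF_nonneg t ht
    have h2 : 0 ≤ B * F t := mul_nonneg hB h1
    simp only [hu_def]; linarith
  have hu_pos : ∀ t ∈ Set.Icc (0:ℝ) T, 0 < u t :=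
    fun t ht => lt_of_lt_of_le he1 (hu_ge t ht)
  have hfu : ∀ t ∈ Set.Icc (0:ℝ) T, Real.exp 1 + f t ≤ u t := by
    intro t ht
    have := hmain t ht
    simp only [hu_def, hF_def]; linarith
  have hv_ge : ∀ t ∈ Set.Icc (0:ℝ) T, 1 ≤ v t := by
    intro t ht
    have := Real.log_le_log he1 (hu_ge t ht)
    simpa [hv_def, Real.log_exp] using this
  -- continuity of F, u, v
  have hF_cont : ContinuousOn F (Set.Icc 0 T) := by
    have h := intervalIntegral.continuousOn_primitive_interval'
      (hg_int T ⟨hT, le_rfl⟩) Set.left_mem_uIcc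
    rwa [Set.uIcc_of_le hT] at h
  have hu_cont : ContinuousOn u (Set.Icc 0 T) :=
    continuousOn_const.add (continuousOn_const.mul hF_cont)
  have hv_cont : ContinuousOn v (Set.Icc 0 T) :=
    hu_cont.log fun t ht => (hu_pos t ht).ne'
  -- derivative of v
  have hv_deriv : ∀ x ∈ Set.Ico (0:ℝ) T,
      HasDerivWithinAt v ((u x)⁻¹ * (B * g x)) (Set.Ici x) x := by
    intro x hx
    have hx' : x ∈ Set.Icc (0:ℝ) T := ⟨hx.1, hx.2.le⟩
    have hxT : x < T := hx.2
    have hFd : HasDerivWithinAt F (g x) (Set.Ici x) x := by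
      have hmeas : StronglyMeasurableAtFilter g (nhdsWithin x (Set.Ioi x))
          MeasureTheory.volume := by
        refine ⟨Set.Ioc x T, Ioc_mem_nhdsGT hxT, ?_⟩
        exact (hg_cont.mono (Set.Ioc_subset_Icc_self.trans
          (Set.Icc_subset_Icc hx.1 le_rfl))).aestronglyMeasurable measurableSet_Ioc
      have hcwa : ContinuousWithinAt g (Set.Ioi x) x := by
        have h1 : ContinuousWithinAt g (Set.Icc x T) x :=
          (hg_cont x hx').mono (Set.Icc_subset_Icc hx.1 le_rfl)
        have h2 : ContinuousWithinAt g (Set.Ici x) x := by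
          rwa [ContinuousWithinAt, nhdsWithin_Icc_eq_nhdsGE hxT] at h1
        exact h2.mono Set.Ioi_subset_Ici_self
      exact intervalIntegral.integral_hasDerivWithinAt_right (hg_int x hx') hmeas hcwa
    have hud : HasDerivWithinAt u (B * g x) (Set.Ici x) x :=
      (hFd.const_mul B).const_add (Real.exp 1 + A)
    have := (Real.hasDerivAt_log (hu_pos x hx').ne').comp_hasDerivWithinAt x hud
    exact this
  -- bound on the derivative
  have hbound : ∀ x ∈ Set.Ico (0:ℝ) T, (u x)⁻¹ * (B * g x) ≤ B * v x + 0 := by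
    intro x hx
    have hx' : x ∈ Set.Icc (0:ℝ) T := ⟨hx.1, hx.2.le⟩
    have hupos := hu_pos x hx'
    have hfx := hf_nonneg x hx'
    have hfux := hfu x hx'
    have hlog_le : Real.log (Real.exp 1 + f x) ≤ v x :=
      Real.log_le_log (by positivity) hfux
    have hlog_nonneg : (0:ℝ) ≤ Real.log (Real.exp 1 + f x) :=
      Real.log_nonneg (by linarith)
    have hfle : f x ≤ u x := by linarith
    have hvx : 0 ≤ v x := le_trans zero_le_one (hv_ge x hx')
    have hg_le : g x ≤ u x * v x := mul_le_mul hfle hlog_le hlog_nonneg hupos.le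
    rw [add_zero, inv_mul_le_iff₀ hupos]
    calc B * g x ≤ B * (u x * v x) := mul_le_mul_of_nonneg_left hg_le hB
      _ = u x * (B * v x) := by ring
  -- Gronwall
  have key : ∀ x ∈ Set.Icc (0:ℝ) T,
      v x ≤ gronwallBound (Real.log (Real.exp 1 + A)) B 0 (x - 0) := by
    apply le_gronwallBound_of_liminf_deriv_right_le hv_cont
      (fun x hx r hr => (hv_deriv x hx).liminf_right_slope_le hr) _ hbound
    have hF0 : F 0 = 0 := intervalIntegral.integral_same
    simp [hv_def, hu_def, hF0]
  -- conclusion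
  intro t ht
  have hvt := key t ht
  rw [sub_zero, gronwallBound_ε0] at hvt
  have h1 : u t ≤ Real.exp (Real.log (Real.exp 1 + A) * Real.exp (B * t)) := by
    have := Real.exp_le_exp.2 hvt
    rwa [hv_def, Real.exp_log (hu_pos t ht)] at this
  have h2 : (Real.exp 1 + A) ^ Real.exp (B * t)
      = Real.exp (Real.log (Real.exp 1 + A) * Real.exp (B * t)) :=
    Real.rpow_def_of_pos (by positivity) _
  rw [h2]
  exact le_trans (hfu t ht) h1
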